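/- Let T > 0 and define u : (−∞,T) × ℝ → ℝ by u(t,x) = −x/(4(T−t)). Then u is a classical solution of the Degasperis–Procesi equation on (0,T) × ℝ: for all 0 < t < T and all x ∈ ℝ, ∂ₜu − ∂ₜ∂ₓ²u + 4u·∂ₓu = 3·∂ₓu·∂ₓ²u + u·∂ₓ³u. -/
import Mathlib


/-- Partial derivative in the first (time) variable of a curried function. -/
noncomputable def partialT (u : ℝ → ℝ → ℝ) (t x : ℝ) : ℝ := deriv (fun s => u s x) t

/-- Partial derivative in the second (space) variable of a curried function. -/
noncomputable def partialX (u : ℝ → ℝ → ℝ) (t x : ℝ) : ℝ := deriv (fun y => u t y) x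

/-- `u(t,x) = -x/(4(T-t))` is a classical solution of the Degasperis–Procesi equation
`u_t - u_{txx} + 4 u u_x = 3 u_x u_{xx} + u u_{xxx}` on `(0,T) × ℝ`. -/
theorem selfSimilar_solves_degasperisProcesi
    (T : ℝ) (hT : 0 < T) (u : ℝ → ℝ → ℝ)
    (hu : ∀ t x : ℝ, u t x = -x / (4 * (T - t))) :
    ∀ t x : ℝ, 0 < t → t < T →
      partialT u t x - partialT (partialX (partialX u)) t x
        + 4 * u t x * partialX u t x
      = 3 * partialX u t x * partialX (partialX u) t x
        + u t x * partialX (partialX (partialX u)) t x := by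
  -- first spatial derivative: constant in x
  have hX : ∀ t x : ℝ, partialX u t x = -(4 * (T - t))⁻¹ := by
    intro t x
    have hfun : (fun y => u t y) = fun y => (-(4 * (T - t))⁻¹) * y := by
      funext y
      rw [hu]
      ring
    rw [partialX, hfun]
    have := ((hasDerivAt_id x).const_mul (-(4 * (T - t))⁻¹)).deriv
    simpa using this
  -- second spatial derivative vanishes
  have hXX : ∀ t x : ℝ, partialX (partialX u) t x = 0 := by
    intro t x
    have hfun : (fun y => partialX u t y) = fun _ => -(4 * (T - t))⁻¹ := by
      funext y; exact hX t y
    rw [partialX, hfun, deriv_const]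
  -- third spatial derivative vanishes
  have hXXX : ∀ t x : ℝ, partialX (partialX (partialX u)) t x = 0 := by
    intro t x
    have hfun : (fun y => partialX (partialX u) t y) = fun _ => (0 : ℝ) := by
      funext y; exact hXX t y
    rw [partialX, hfun, deriv_const]
  -- mixed derivative vanishes
  have hTXX : ∀ t x : ℝ, partialT (partialX (partialX u)) t x = 0 := by
    intro t x
    have hfun : (fun s => partialX (partialX u) s x) = fun _ => (0 : ℝ) := by
      funext s; exact hXX s x
    rw [partialT, hfun, deriv_const]
  intro t x ht htT
  have hc : T - t ≠ 0 := by linarith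
  have hc4 : (4 : ℝ) * (T - t) ≠ 0 := by
    intro h; apply hc; linarith [h]
  -- time derivative
  have hT' : partialT u t x = -x * (4 / (4 * (T - t)) ^ 2) := by
    have hg : HasDerivAt (fun s : ℝ => 4 * (T - s)) (-4) t := by
      have := ((hasDerivAt_id t).const_sub T).const_mul (4 : ℝ)
      simpa using this
    have hinv : HasDerivAt (fun s : ℝ => (4 * (T - s))⁻¹)
        (-(-4) / (4 * (T - t)) ^ 2) t := hg.inv hc4
    have hfin : HasDerivAt (fun s : ℝ => u s x)
        ((-x) * (-(-4) / (4 * (T - t)) ^ 2)) t := by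
      have h2 := hinv.const_mul (-x)
      have hfun : (fun s : ℝ => u s x) = fun s => (-x) * (4 * (T - s))⁻¹ := by
        funext s; rw [hu]; ring
      rw [hfun]; exact h2
    rw [partialT, hfin.deriv]; ring
  rw [hT', hTXX, hXXX, hXX, hX, hu]
  field_simp
  ring
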